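/- With J orthogonal, J² = -I, and B coisotropic (B⊥ ⊆ B) in V ⊕ V*: J(B) ⊆ B + J(B⊥) if and only if B = (B ∩ JB) + B⊥. -/
import Mathlib


open Module LinearMap

set_option maxSynthPendingDepth 3

/-- The symmetric pairing `⟨X+ξ, Y+η⟩ = (ξ(Y) + η(X))/2` on `V ⊕ V*`. -/
noncomputable def pair (V : Type) [AddCommGroup V] [Module ℝ V] :
    LinearMap.BilinForm ℝ (V × Module.Dual ℝ V) :=
  LinearMap.mk₂ ℝ (fun u v => (u.2 v.1 + v.2 u.1) / 2)
    (by intro m₁ m₂ n; simp; ring)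
    (by intro c m n; simp [smul_eq_mul]; ring)
    (by intro m n₁ n₂; simp; ring)
    (by intro c m n; simp [smul_eq_mul]; ring)

/-- For `J` orthogonal with `J² = -I` and `B` coisotropic:
`J(B) ⊆ B + J(B⊥)` iff `B = (B ∩ JB) + B⊥`. -/
theorem jb_le_iff_b_eq
    (V : Type) [AddCommGroup V] [Module ℝ V] [FiniteDimensional ℝ V]
    (J : (V × Module.Dual ℝ V) →ₗ[ℝ] (V × Module.Dual ℝ V))
    (hJ2 : ∀ u, J (J u) = -u)
    (horth : ∀ u v, pair V (J u) (J v) = pair V u v)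
    (B : Submodule ℝ (V × Module.Dual ℝ V))
    (hco : (pair V).orthogonal B ≤ B) :
    (Submodule.map J B ≤ B ⊔ Submodule.map J ((pair V).orthogonal B)) ↔
    (B = (B ⊓ Submodule.map J B) ⊔ (pair V).orthogonal B) := by
  constructor
  · intro h
    apply le_antisymm
    · intro b hb
      have hJb : J b ∈ B ⊔ Submodule.map J ((pair V).orthogonal B) :=
        h ⟨b, hb, rfl⟩
      rcases Submodule.mem_sup.mp hJb with ⟨b', hb', z, hz, hsum⟩
      rcases hz with ⟨c, hc, rfl⟩
      -- from J(Jb) = -b : -b = J b' - c, so b = c - J b'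
      have key : J b' = c - b := by
        have h2 : -b = J b' + -c := by rw [← hJ2 b, ← hsum, map_add, hJ2 c]
        have h3 : J b' = -b - -c := eq_sub_of_add_eq h2.symm
        rw [h3]; abel
      have hJb'B : J b' ∈ B := by
        rw [key]; exact B.sub_mem (hco hc) hb
      have hbeq : b = -(J b') + c := by rw [key]; abel
      rw [hbeq]
      refine Submodule.add_mem_sup ?_ hc
      exact neg_mem ⟨hJb'B, ⟨b', hb', rfl⟩⟩
    · exact sup_le inf_le_left hco
  · intro h
    rintro x ⟨b, hb, rfl⟩
    rw [h] at hb
    rcases Submodule.mem_sup.mp hb with ⟨m, hm, c, hc, rfl⟩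
    rw [map_add]
    refine Submodule.add_mem_sup ?_ ⟨c, hc, rfl⟩
    rcases hm.2 with ⟨m', hm', rfl⟩
    rw [hJ2 m']
    exact B.neg_mem hm'
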